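/- Let $A$, $B$, $C$ be points on the unit circle and $\lambda < 0$ a real number. Then there exists a point $M$ on the unit circle, distinct from $A$, $B$, $C$, such that $MA^{\lambda} + MB^{\lambda} + MC^{\lambda} \le 2 + 2^{\lambda}$. -/

import Mathlib

open Real

-- analytic key: if all distances ≥ 1 and product ≥ 2, sum of powers is small
lemma kkey (lam d1 d2 d3 : ℝ) (hlam : lam < 0) (h1 : 1 ≤ d1) (h2 : 1 ≤ d2) (h3 : 1 ≤ d3)
    (hp : 2 ≤ d1 * d2 * d3) :
    d1 ^ lam + d2 ^ lam + d3 ^ lam ≤ 2 + (2:ℝ) ^ lam := by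
  have hl := hlam.le
  have e1 : d1 ^ lam ≤ 1 := Real.rpow_le_one_of_one_le_of_nonpos h1 hl
  have e2 : d2 ^ lam ≤ 1 := Real.rpow_le_one_of_one_le_of_nonpos h2 hl
  have e3 : d3 ^ lam ≤ 1 := Real.rpow_le_one_of_one_le_of_nonpos h3 hl
  have p1 : (0:ℝ) ≤ d1 ^ lam := Real.rpow_nonneg (by linarith) _
  have p2 : (0:ℝ) ≤ d2 ^ lam := Real.rpow_nonneg (by linarith) _
  have p3 : (0:ℝ) ≤ d3 ^ lam := Real.rpow_nonneg (by linarith) _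
  have m12 : (d1 * d2) ^ lam = d1 ^ lam * d2 ^ lam :=
    Real.mul_rpow (by linarith) (by linarith)
  have m123 : (d1 * d2 * d3) ^ lam = d1 ^ lam * d2 ^ lam * d3 ^ lam := by
    rw [Real.mul_rpow (by positivity) (by linarith), m12]
  have hfin : (d1 * d2 * d3) ^ lam ≤ (2:ℝ) ^ lam :=
    Real.rpow_le_rpow_of_nonpos (by norm_num) hp hl
  rw [m123] at hfin
  nlinarith [mul_nonneg (sub_nonneg.2 e1) (sub_nonneg.2 e2),
    mul_nonneg (mul_nonneg (sub_nonneg.2 e1) (sub_nonneg.2 e2)) (sub_nonneg.2 e3),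
    mul_nonneg (sub_nonneg.2 e3) (sub_nonneg.2 (mul_le_one₀ e1 p2 e2))]


-- trig key: M at angular distance α from the two endpoints of largest arc (half-width α),
-- and y+α from the third point
lemma tkey (α x y : ℝ) (hx : 0 ≤ x) (hy : 0 ≤ y) (hx2 : x ≤ 2*α) (hy2 : y ≤ 2*α)
    (hsum : x + y + 2*α = 2*π) :
    cos α ≤ 1/2 ∧ cos (y+α) ≤ 1/2 ∧ 1/2 ≤ (1 - cos α)^2 * (1 - cos (y+α)) := by
  have hπ : (0:ℝ) < π := pi_pos
  have ha3 : π/3 ≤ α := by linarith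
  have haπ : α ≤ π := by linarith
  have hca : cos α ≤ 1/2 := by
    have := cos_le_cos_of_nonneg_of_le_pi (by positivity) haπ ha3
    rwa [cos_pi_div_three] at this
  -- θ := min (y+α) (x+α);  cos (y+α) = cos θ
  set θ := min (y+α) (x+α) with hθdef
  have hθeq : cos (y+α) = cos θ := by
    rcases le_total (y+α) (x+α) with h | h
    · rw [hθdef, min_eq_left h]
    · rw [hθdef, min_eq_right h]
      have : y + α = 2*π - (x+α) := by linarith
      rw [this, cos_two_pi_sub]
  have hθ3 : π/3 ≤ θ := le_min (by linarith) (by linarith)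
  have hθπ : θ ≤ π := by
    rcases le_total (y+α) (x+α) with h | h
    · rw [hθdef, min_eq_left h]; linarith
    · rw [hθdef, min_eq_right h]; linarith
  have hcθ : cos θ ≤ 1/2 := by
    have := cos_le_cos_of_nonneg_of_le_pi (by positivity) hθπ hθ3
    rwa [cos_pi_div_three] at this
  refine ⟨hca, by rw [hθeq]; exact hcθ, ?_⟩
  rw [hθeq]
  rcases le_total (π/2) α with h2 | h2
  · -- α ≥ π/2 : cos α ≤ 0
    have hca0 : cos α ≤ 0 := cos_nonpos_of_pi_div_two_le_of_le h2 (by linarith)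
    nlinarith
  · -- α ≤ π/2
    have ht0 : 0 ≤ cos α := cos_nonneg_of_neg_pi_div_two_le_of_le (by linarith) h2
    have hθge : 2*π - 3*α ≤ θ := le_min (by linarith) (by linarith)
    have hcθ2 : cos θ ≤ cos (2*π - 3*α) :=
      cos_le_cos_of_nonneg_of_le_pi (by linarith) hθπ hθge
    rw [cos_two_pi_sub, show (3:ℝ)*α = 3*α from rfl, cos_three_mul] at hcθ2
    set t := cos α
    have ht12 : t ≤ 1/2 := hca
    nlinarith [sq_nonneg (2*t^2 - 1), mul_nonneg ht0 (sub_nonneg.2 ht12),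
      mul_nonneg (mul_nonneg ht0 ht0) (sub_nonneg.2 ht12),
      mul_nonneg (mul_nonneg (mul_nonneg ht0 ht0) ht0) (sub_nonneg.2 ht12),
      sq_nonneg (1-t), sq_nonneg t, mul_nonneg (sq_nonneg (1-2*t)) ht0]

-- ordered case: points at angles a, a+u, a+v with 0 ≤ u ≤ v ≤ 2π
lemma g2 (a u v : ℝ) (hu : 0 ≤ u) (huv : u ≤ v) (hv : v ≤ 2*π) :
    ∃ m, cos (m - a) ≤ 1/2 ∧ cos (m - (a+u)) ≤ 1/2 ∧ cos (m - (a+v)) ≤ 1/2 ∧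
      1/2 ≤ (1 - cos (m - a)) * (1 - cos (m - (a+u))) * (1 - cos (m - (a+v))) := by
  have hπ : (0:ℝ) < π := pi_pos
  rcases le_total (v - u) u with h21 | h21
  · rcases le_total (2*π - v) u with h31 | h31
    · -- arc1 (length u) largest: m = a + u/2
      refine ⟨a + u/2, ?_⟩
      have e1 : cos (a + u/2 - a) = cos (u/2) := by ring_nf
      have e2 : cos (a + u/2 - (a+u)) = cos (u/2) := by
        rw [show a + u/2 - (a+u) = -(u/2) by ring, cos_neg]
      have e3 : cos (a + u/2 - (a+v)) = cos ((v-u) + u/2) := by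
        rw [show a + u/2 - (a+v) = -((v-u) + u/2) by ring, cos_neg]
      obtain ⟨c1, c2, c3⟩ := tkey (u/2) (2*π - v) (v - u)
        (by linarith) (by linarith) (by linarith) (by linarith) (by ring)
      rw [e1, e2, e3]
      exact ⟨c1, c1, c2, by nlinarith⟩
    · -- arc3 (length 2π - v) largest: m = a + v + (2π-v)/2
      refine ⟨a + v + (2*π - v)/2, ?_⟩
      have e1 : cos (a + v + (2*π-v)/2 - a) = cos ((2*π-v)/2) := by
        rw [show a + v + (2*π-v)/2 - a = 2*π - (2*π-v)/2 by ring, cos_two_pi_sub]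
      have e2 : cos (a + v + (2*π-v)/2 - (a+u)) = cos ((v-u) + (2*π-v)/2) := by ring_nf
      have e3 : cos (a + v + (2*π-v)/2 - (a+v)) = cos ((2*π-v)/2) := by ring_nf
      obtain ⟨c1, c2, c3⟩ := tkey ((2*π-v)/2) u (v - u)
        (by linarith) (by linarith) (by linarith) (by linarith) (by ring)
      rw [e1, e2, e3]
      exact ⟨c1, c2, c1, by nlinarith⟩
  · rcases le_total (2*π - v) (v - u) with h32 | h32
    · -- arc2 (length v - u) largest: m = a + (u+v)/2
      refine ⟨a + (u+v)/2, ?_⟩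
      have e1 : cos (a + (u+v)/2 - a) = cos (u + (v-u)/2) := by ring_nf
      have e2 : cos (a + (u+v)/2 - (a+u)) = cos ((v-u)/2) := by ring_nf
      have e3 : cos (a + (u+v)/2 - (a+v)) = cos ((v-u)/2) := by
        rw [show a + (u+v)/2 - (a+v) = -((v-u)/2) by ring, cos_neg]
      obtain ⟨c1, c2, c3⟩ := tkey ((v-u)/2) (2*π - v) u
        (by linarith) (by linarith) (by linarith) (by linarith) (by ring)
      rw [e1, e2, e3]
      exact ⟨c2, c1, c1, by nlinarith⟩
    · -- arc3 largest again
      refine ⟨a + v + (2*π - v)/2, ?_⟩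
      have e1 : cos (a + v + (2*π-v)/2 - a) = cos ((2*π-v)/2) := by
        rw [show a + v + (2*π-v)/2 - a = 2*π - (2*π-v)/2 by ring, cos_two_pi_sub]
      have e2 : cos (a + v + (2*π-v)/2 - (a+u)) = cos ((v-u) + (2*π-v)/2) := by ring_nf
      have e3 : cos (a + v + (2*π-v)/2 - (a+v)) = cos ((2*π-v)/2) := by ring_nf
      obtain ⟨c1, c2, c3⟩ := tkey ((2*π-v)/2) u (v - u)
        (by linarith) (by linarith) (by linarith) (by linarith) (by ring)
      rw [e1, e2, e3]
      exact ⟨c1, c2, c1, by nlinarith⟩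

-- general angles
lemma gkey (a b c : ℝ) : ∃ m, cos (m-a) ≤ 1/2 ∧ cos (m-b) ≤ 1/2 ∧ cos (m-c) ≤ 1/2 ∧
    1/2 ≤ (1 - cos (m-a)) * (1 - cos (m-b)) * (1 - cos (m-c)) := by
  have hπ : (0:ℝ) < π := pi_pos
  set u := b - a - ⌊(b-a)/(2*π)⌋ * (2*π) with hudef
  set v := c - a - ⌊(c-a)/(2*π)⌋ * (2*π) with hvdef
  have hu0 : 0 ≤ u := by
    rw [hudef]; exact Int.sub_floor_div_mul_nonneg (b-a) (by positivity)
  have hu2 : u < 2*π := by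
    rw [hudef]; exact Int.sub_floor_div_mul_lt (b-a) (by positivity)
  have hv0 : 0 ≤ v := by
    rw [hvdef]; exact Int.sub_floor_div_mul_nonneg (c-a) (by positivity)
  have hv2 : v < 2*π := by
    rw [hvdef]; exact Int.sub_floor_div_mul_lt (c-a) (by positivity)
  have hb : ∀ m, cos (m - b) = cos (m - (a + u)) := by
    intro m
    rw [show m - b = m - (a+u) + ((-⌊(b-a)/(2*π)⌋ : ℤ) : ℝ) * (2*π) by rw [hudef]; push_cast; ring,
      cos_add_int_mul_two_pi]
  have hc : ∀ m, cos (m - c) = cos (m - (a + v)) := by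
    intro m
    rw [show m - c = m - (a+v) + ((-⌊(c-a)/(2*π)⌋ : ℤ) : ℝ) * (2*π) by rw [hvdef]; push_cast; ring,
      cos_add_int_mul_two_pi]
  rcases le_total u v with huv | huv
  · obtain ⟨m, h1, h2, h3, h4⟩ := g2 a u v hu0 huv hv2.le
    exact ⟨m, h1, by rw [hb]; exact h2, by rw [hc]; exact h3, by rw [hb, hc]; nlinarith⟩
  · obtain ⟨m, h1, h2, h3, h4⟩ := g2 a v u hv0 huv hu2.le
    exact ⟨m, h1, by rw [hb]; exact h3, by rw [hc]; exact h2, by rw [hb, hc]; nlinarith⟩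


noncomputable def PT (θ : ℝ) : EuclideanSpace ℝ (Fin 2) :=
  (WithLp.equiv 2 (Fin 2 → ℝ)).symm ![Real.cos θ, Real.sin θ]

lemma PT_apply0 (θ : ℝ) : PT θ 0 = Real.cos θ := rfl
lemma PT_apply1 (θ : ℝ) : PT θ 1 = Real.sin θ := rfl

lemma PT_mem (θ : ℝ) : PT θ ∈ Metric.sphere (0 : EuclideanSpace ℝ (Fin 2)) 1 := by
  rw [Metric.mem_sphere, dist_zero_right, EuclideanSpace.norm_eq, Fin.sum_univ_two,
    PT_apply0, PT_apply1]
  rw [Real.norm_eq_abs, Real.norm_eq_abs, sq_abs, sq_abs]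
  rw [show Real.cos θ ^ 2 + Real.sin θ ^ 2 = 1 by
    rw [add_comm]; exact Real.sin_sq_add_cos_sq θ]
  exact Real.sqrt_one

lemma PT_dist (θ₁ θ₂ : ℝ) : dist (PT θ₁) (PT θ₂) = Real.sqrt (2 - 2 * Real.cos (θ₁ - θ₂)) := by
  rw [EuclideanSpace.dist_eq, Fin.sum_univ_two, PT_apply0, PT_apply1, PT_apply0, PT_apply1]
  congr 1
  rw [Real.dist_eq, Real.dist_eq, sq_abs, sq_abs]
  have h1 := Real.sin_sq_add_cos_sq θ₁
  have h2 := Real.sin_sq_add_cos_sq θ₂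
  have h3 := Real.cos_sub θ₁ θ₂
  nlinarith [h3]

lemma PT_surj (x : EuclideanSpace ℝ (Fin 2))
    (hx : x ∈ Metric.sphere (0 : EuclideanSpace ℝ (Fin 2)) 1) : ∃ θ, x = PT θ := by
  rw [Metric.mem_sphere, dist_zero_right, EuclideanSpace.norm_eq, Fin.sum_univ_two] at hx
  rw [Real.norm_eq_abs, Real.norm_eq_abs, sq_abs, sq_abs] at hx
  have hs : x 0 ^ 2 + x 1 ^ 2 = 1 := by
    have h0 : (0:ℝ) ≤ x 0 ^ 2 + x 1 ^ 2 := by positivity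
    nlinarith [Real.sq_sqrt h0]
  have hx0 : x 0 ∈ Set.Icc (-1:ℝ) 1 := by
    constructor <;> nlinarith [sq_nonneg (x 1)]
  have habs : Real.sqrt (1 - x 0 ^ 2) = |x 1| := by
    rw [show 1 - x 0 ^ 2 = x 1 ^ 2 by nlinarith, Real.sqrt_sq_eq_abs]
  have key : ∀ θ, Real.cos θ = x 0 → Real.sin θ = x 1 → x = PT θ := by
    intro θ hc hsn
    ext i
    fin_cases i
    · simpa [PT_apply0] using hc.symm
    · simpa [PT_apply1] using hsn.symm
  rcases le_or_gt 0 (x 1) with h | h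
  · exact ⟨Real.arccos (x 0), key _ (Real.cos_arccos hx0.1 hx0.2)
      (by rw [Real.sin_arccos, habs, abs_of_nonneg h])⟩
  · refine ⟨-Real.arccos (x 0), key _ ?_ ?_⟩
    · rw [Real.cos_neg]; exact Real.cos_arccos hx0.1 hx0.2
    · rw [Real.sin_neg, Real.sin_arccos, habs, abs_of_neg h]; ring

theorem stmt_3 (A B C : EuclideanSpace ℝ (Fin 2))
    (hA : A ∈ Metric.sphere (0 : EuclideanSpace ℝ (Fin 2)) 1)
    (hB : B ∈ Metric.sphere (0 : EuclideanSpace ℝ (Fin 2)) 1)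
    (hC : C ∈ Metric.sphere (0 : EuclideanSpace ℝ (Fin 2)) 1)
    (lam : ℝ) (hlam : lam < 0) :
    ∃ M ∈ Metric.sphere (0 : EuclideanSpace ℝ (Fin 2)) 1,
      M ≠ A ∧ M ≠ B ∧ M ≠ C ∧
      dist M A ^ lam + dist M B ^ lam + dist M C ^ lam ≤ 2 + (2 : ℝ) ^ lam := by
  obtain ⟨a, rfl⟩ := PT_surj A hA
  obtain ⟨b, rfl⟩ := PT_surj B hB
  obtain ⟨c, rfl⟩ := PT_surj C hC
  obtain ⟨m, h1, h2, h3, h4⟩ := gkey a b c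
  refine ⟨PT m, PT_mem m, ?_⟩
  have dist1 : ∀ θ : ℝ, Real.cos (m - θ) ≤ 1/2 → 1 ≤ dist (PT m) (PT θ) := by
    intro θ hθ
    rw [PT_dist]
    rw [show (1:ℝ) = Real.sqrt 1 from Real.sqrt_one.symm]
    exact Real.sqrt_le_sqrt (by linarith)
  have d1 := dist1 a h1
  have d2 := dist1 b h2
  have d3 := dist1 c h3
  have ne1 : PT m ≠ PT a := by rw [← dist_pos]; linarith
  have ne2 : PT m ≠ PT b := by rw [← dist_pos]; linarith
  have ne3 : PT m ≠ PT c := by rw [← dist_pos]; linarith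
  refine ⟨ne1, ne2, ne3, ?_⟩
  apply kkey _ _ _ _ hlam d1 d2 d3
  rw [PT_dist, PT_dist, PT_dist]
  have e1 : (0:ℝ) ≤ 2 - 2 * Real.cos (m - a) := by
    nlinarith [Real.neg_one_le_cos (m - a)]
  have e2 : (0:ℝ) ≤ 2 - 2 * Real.cos (m - b) := by
    nlinarith [Real.neg_one_le_cos (m - b)]
  have e3 : (0:ℝ) ≤ 2 - 2 * Real.cos (m - c) := by
    nlinarith [Real.neg_one_le_cos (m - c)]
  rw [← Real.sqrt_mul e1, ← Real.sqrt_mul (mul_nonneg e1 e2)]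
  have h4' : (4:ℝ) ≤ (2 - 2*Real.cos (m-a)) * (2 - 2*Real.cos (m-b)) * (2 - 2*Real.cos (m-c)) := by
    nlinarith
  calc (2:ℝ) = Real.sqrt 4 := by
        rw [show (4:ℝ) = 2^2 by norm_num, Real.sqrt_sq (by norm_num)]
    _ ≤ _ := Real.sqrt_le_sqrt h4'
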